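/- In the setting of the previous expectation bound, for any $\delta_3>0$, defining $\Pi_\# := \frac{1}{|\Delta|}\sum_{v\in\Delta}\mathbb{1}[\eta_v\in A_\#]$ for $\#\in\{-,+\}$, one has $\mathbb{P}(\max\{\Pi_-,\Pi_+\} \ge 1-\delta_3) \ge 1 - 2(\delta_1+\delta_2)/\delta_3$. -/

import Mathlib

open MeasureTheory
open Classical in
theorem stmt_3 {Ω : Type*} [MeasurableSpace Ω] (ℙ : Measure Ω) [IsProbabilityMeasure ℙ]
    {S : Type*} [MeasurableSpace S] (Am Ap : Set S)
    (hAm : MeasurableSet Am) (hAp : MeasurableSet Ap) (hdisj : Disjoint Am Ap)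
    {Δ : Type*} [Fintype Δ] [Nonempty Δ] (η : Δ → Ω → S) (hη : ∀ v, Measurable (η v))
    (δ₁ δ₂ δ₃ : ℝ) (hδ₃ : 0 < δ₃)
    (h1 : ∀ v : Δ, (ℙ {ω | η v ω ∉ Am ∪ Ap}).toReal ≤ δ₁)
    (h2 : ∀ v w : Δ, (ℙ {ω | η v ω ∈ Am ∧ η w ω ∈ Ap}).toReal ≤ δ₂) :
    1 - 2 * (δ₁ + δ₂) / δ₃ ≤
      (ℙ {ω | 1 - δ₃ ≤
        max ((Fintype.card Δ : ℝ)⁻¹ * ∑ v : Δ, (if η v ω ∈ Am then (1:ℝ) else 0))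
            ((Fintype.card Δ : ℝ)⁻¹ * ∑ v : Δ, (if η v ω ∈ Ap then (1:ℝ) else 0))}).toReal := by
  classical
  set n : ℝ := (Fintype.card Δ : ℝ) with hn
  have hn0 : 0 < n := by
    rw [hn]
    exact_mod_cast Fintype.card_pos (α := Δ)
  set f : Δ → Ω → ℝ := fun v ω => if η v ω ∈ Am then 1 else 0 with hfdef
  set g : Δ → Ω → ℝ := fun v ω => if η v ω ∈ Ap then 1 else 0 with hgdef
  set h : Δ → Ω → ℝ := fun v ω => if η v ω ∉ Am ∪ Ap then 1 else 0 with hhdef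
  set Pm : Ω → ℝ := fun ω => n⁻¹ * ∑ v, f v ω with hPm
  set Pp : Ω → ℝ := fun ω => n⁻¹ * ∑ v, g v ω with hPp
  set Ψ : Ω → ℝ := fun ω =>
    2 * n⁻¹ * ∑ v, h v ω + 2 * (n⁻¹)^2 * ∑ v, ∑ w, f v ω * g w ω with hΨdef
  -- basic measurable sets
  have hTm : ∀ v, MeasurableSet {ω | η v ω ∈ Am} := fun v => (hη v) hAm
  have hTp : ∀ v, MeasurableSet {ω | η v ω ∈ Ap} := fun v => (hη v) hAp
  have hTn : ∀ v, MeasurableSet {ω | η v ω ∉ Am ∪ Ap} := fun v =>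
    ((hη v) (hAm.union hAp)).compl
  -- integrals of indicators
  have hI : ∀ (p : Ω → Prop), MeasurableSet {ω | p ω} →
      Integrable (fun ω => if p ω then (1:ℝ) else 0) ℙ := by
    intro p hp
    have hc : Integrable (fun _ : Ω => (1:ℝ)) ℙ := integrable_const 1
    have := hc.indicator hp
    refine this.congr (Filter.Eventually.of_forall (fun ω => ?_))
    by_cases hpω : p ω <;> simp [Set.indicator_apply, Set.mem_setOf_eq, hpω]
  have hIval : ∀ (p : Ω → Prop), MeasurableSet {ω | p ω} →
      ∫ ω, (if p ω then (1:ℝ) else 0) ∂ℙ = (ℙ {ω | p ω}).toReal := by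
    intro p hp
    have h0 : ∫ ω, Set.indicator {ω | p ω} 1 ω ∂ℙ = (ℙ {ω | p ω}).toReal :=
      integral_indicator_one hp
    rw [← h0]
    refine integral_congr_ae (Filter.Eventually.of_forall (fun ω => ?_))
    by_cases hpω : p ω <;> simp [Set.indicator_apply, Set.mem_setOf_eq, hpω]
  -- pointwise rewrite of the product
  have hfg : ∀ v w ω, f v ω * g w ω =
      if (η v ω ∈ Am ∧ η w ω ∈ Ap) then (1:ℝ) else 0 := by
    intro v w ω
    simp only [hfdef, hgdef]
    by_cases h1 : η v ω ∈ Am <;> by_cases h2 : η w ω ∈ Ap <;> simp [h1, h2]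
  have hTfg : ∀ v w, MeasurableSet {ω | η v ω ∈ Am ∧ η w ω ∈ Ap} := by
    intro v w
    exact (hTm v).inter (hTp w)
  -- integrability of Ψ
  have iteeq : ∀ (p : Ω → Prop) (F : Ω → ℝ), (∀ ω, F ω = if p ω then 1 else 0) →
      Integrable (fun ω => if p ω then (1:ℝ) else 0) ℙ → Integrable F ℙ := by
    intro p F hF hII
    refine hII.congr (Filter.Eventually.of_forall (fun ω => (hF ω).symm))
  have hintf : ∀ v, Integrable (f v) ℙ := fun v => iteeq _ _ (fun ω => rfl) (hI _ (hTm v))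
  have hintg : ∀ v, Integrable (g v) ℙ := fun v => iteeq _ _ (fun ω => rfl) (hI _ (hTp v))
  have hinth : ∀ v, Integrable (h v) ℙ := fun v =>
    iteeq _ _ (fun ω => by simp only [hhdef]; split_ifs <;> rfl) (hI _ (hTn v))
  have hintfg : ∀ v w, Integrable (fun ω => f v ω * g w ω) ℙ := by
    intro v w
    refine iteeq _ _ (fun ω => ?_) (hI _ (hTfg v w))
    by_cases h1 : η v ω ∈ Am <;> by_cases h2 : η w ω ∈ Ap <;>
      simp [hfdef, hgdef, h1, h2]
  have hΨint : Integrable Ψ ℙ := by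
    apply Integrable.add
    · exact (integrable_finset_sum _ (fun v _ => hinth v)).const_mul _
    · exact (integrable_finset_sum _ (fun v _ =>
        integrable_finset_sum _ (fun w _ => hintfg v w))).const_mul _
  -- expectation bound
  have hEΨ : ∫ ω, Ψ ω ∂ℙ ≤ 2 * δ₁ + 2 * δ₂ := by
    have e1 : ∫ ω, (∑ v, h v ω) ∂ℙ = ∑ v, (ℙ {ω | η v ω ∉ Am ∪ Ap}).toReal := by
      rw [integral_finset_sum _ (fun v _ => hinth v)]
      refine Finset.sum_congr rfl (fun v _ => ?_)
      rw [← hIval _ (hTn v)]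
      refine integral_congr_ae (Filter.Eventually.of_forall (fun ω => ?_))
      simp only [hhdef]; split_ifs <;> rfl
    have e2 : ∫ ω, (∑ v, ∑ w, f v ω * g w ω) ∂ℙ
        = ∑ v : Δ, ∑ w : Δ, (ℙ {ω | η v ω ∈ Am ∧ η w ω ∈ Ap}).toReal := by
      rw [integral_finset_sum _ (fun v _ => integrable_finset_sum _ (fun w _ => hintfg v w))]
      refine Finset.sum_congr rfl (fun v _ => ?_)
      rw [integral_finset_sum _ (fun w _ => hintfg v w)]
      refine Finset.sum_congr rfl (fun w _ => ?_)
      rw [← hIval _ (hTfg v w)]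
      refine integral_congr_ae (Filter.Eventually.of_forall (fun ω => ?_))
      by_cases h1' : η v ω ∈ Am <;> by_cases h2' : η w ω ∈ Ap <;>
        simp [hfdef, hgdef, h1', h2']
    have s1 : ∑ v, (ℙ {ω | η v ω ∉ Am ∪ Ap}).toReal ≤ n * δ₁ := by
      calc ∑ v, (ℙ {ω | η v ω ∉ Am ∪ Ap}).toReal ≤ ∑ _v : Δ, δ₁ :=
            Finset.sum_le_sum (fun v _ => h1 v)
        _ = n * δ₁ := by simp [hn, mul_comm]
    have s2 : ∑ v : Δ, ∑ w : Δ, (ℙ {ω | η v ω ∈ Am ∧ η w ω ∈ Ap}).toReal ≤ n * (n * δ₂) := by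
      calc ∑ v : Δ, ∑ w : Δ, (ℙ {ω | η v ω ∈ Am ∧ η w ω ∈ Ap}).toReal
          ≤ ∑ _v : Δ, ∑ _w : Δ, δ₂ :=
            Finset.sum_le_sum (fun v _ => Finset.sum_le_sum (fun w _ => h2 v w))
        _ = n * (n * δ₂) := by simp [hn]
    have hΨsplit : ∫ ω, Ψ ω ∂ℙ = 2 * n⁻¹ * (∫ ω, (∑ v, h v ω) ∂ℙ)
        + 2 * (n⁻¹)^2 * (∫ ω, (∑ v, ∑ w, f v ω * g w ω) ∂ℙ) := by
      rw [hΨdef]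
      rw [integral_add ((integrable_finset_sum _ (fun v _ => hinth v)).const_mul _)
        ((integrable_finset_sum _ (fun v _ =>
          integrable_finset_sum _ (fun w _ => hintfg v w))).const_mul _),
        integral_const_mul, integral_const_mul]
    rw [hΨsplit, e1, e2]
    have hinv : n⁻¹ * n = 1 := inv_mul_cancel₀ (ne_of_gt hn0)
    have b1 : 2 * n⁻¹ * (∑ v, (ℙ {ω | η v ω ∉ Am ∪ Ap}).toReal) ≤ 2 * δ₁ := by
      have := mul_le_mul_of_nonneg_left s1 (by positivity : (0:ℝ) ≤ 2 * n⁻¹)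
      calc 2 * n⁻¹ * (∑ v, (ℙ {ω | η v ω ∉ Am ∪ Ap}).toReal) ≤ 2 * n⁻¹ * (n * δ₁) := this
        _ = 2 * δ₁ := by field_simp
    have b2 : 2 * (n⁻¹)^2 * (∑ v : Δ, ∑ w : Δ, (ℙ {ω | η v ω ∈ Am ∧ η w ω ∈ Ap}).toReal)
        ≤ 2 * δ₂ := by
      have := mul_le_mul_of_nonneg_left s2 (by positivity : (0:ℝ) ≤ 2 * (n⁻¹)^2)
      calc 2 * (n⁻¹)^2 * (∑ v : Δ, ∑ w : Δ, (ℙ {ω | η v ω ∈ Am ∧ η w ω ∈ Ap}).toReal)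
          ≤ 2 * (n⁻¹)^2 * (n * (n * δ₂)) := this
        _ = 2 * δ₂ := by field_simp
    linarith
  -- pointwise facts
  have hf01 : ∀ v ω, 0 ≤ f v ω ∧ f v ω ≤ 1 := by
    intro v ω; simp only [hfdef]; split <;> norm_num
  have hg01 : ∀ v ω, 0 ≤ g v ω ∧ g v ω ≤ 1 := by
    intro v ω; simp only [hgdef]; split <;> norm_num
  have hPm0 : ∀ ω, 0 ≤ Pm ω := by
    intro ω
    have : 0 ≤ ∑ v, f v ω := Finset.sum_nonneg (fun v _ => (hf01 v ω).1)
    positivity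
  have hPp0 : ∀ ω, 0 ≤ Pp ω := by
    intro ω
    have : 0 ≤ ∑ v, g v ω := Finset.sum_nonneg (fun v _ => (hg01 v ω).1)
    positivity
  have hsum1 : ∀ ω, Pm ω + Pp ω ≤ 1 := by
    intro ω
    have hv : ∀ v, f v ω + g v ω ≤ 1 := by
      intro v
      simp only [hfdef, hgdef]
      by_cases h1 : η v ω ∈ Am
      · have h2 : η v ω ∉ Ap := fun h2 => (Set.disjoint_left.mp hdisj h1) h2
        simp [h1, h2]
      · by_cases h2 : η v ω ∈ Ap <;> simp [h1, h2]
    have : (∑ v, f v ω) + (∑ v, g v ω) ≤ n := by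
      rw [← Finset.sum_add_distrib]
      calc ∑ v, (f v ω + g v ω) ≤ ∑ _v : Δ, (1:ℝ) := Finset.sum_le_sum (fun v _ => hv v)
        _ = n := by simp [hn]
    have := mul_le_mul_of_nonneg_left this (le_of_lt (inv_pos.mpr hn0))
    rw [inv_mul_cancel₀ (ne_of_gt hn0)] at this
    calc Pm ω + Pp ω = n⁻¹ * ((∑ v, f v ω) + (∑ v, g v ω)) := by rw [hPm, hPp]; ring
      _ ≤ 1 := this
  -- Ψ dominates 1 - Pm² - Pp²
  have hΨlb : ∀ ω, 1 - Pm ω ^ 2 - Pp ω ^ 2 ≤ Ψ ω := by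
    intro ω
    have hheq : n⁻¹ * ∑ v, h v ω = 1 - Pm ω - Pp ω := by
      have hv : ∀ v, h v ω = 1 - f v ω - g v ω := by
        intro v
        simp only [hhdef, hfdef, hgdef, Set.mem_union]
        by_cases h1 : η v ω ∈ Am
        · have h2 : η v ω ∉ Ap := fun h2 => (Set.disjoint_left.mp hdisj h1) h2
          simp [h1, h2]
        · by_cases h2 : η v ω ∈ Ap <;> simp [h1, h2]
      have : ∑ v, h v ω = n - (∑ v, f v ω) - (∑ v, g v ω) := by
        rw [Finset.sum_congr rfl (fun v _ => hv v)]
        simp [Finset.sum_sub_distrib, hn]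
      rw [this, hPm, hPp]
      field_simp
    have hprod : (n⁻¹)^2 * ∑ v, ∑ w, f v ω * g w ω = Pm ω * Pp ω := by
      rw [hPm, hPp]
      rw [← Finset.sum_mul_sum]
      ring
    have : Ψ ω = 2 * (1 - Pm ω - Pp ω) + 2 * (Pm ω * Pp ω) := by
      rw [hΨdef]
      simp only []
      rw [mul_assoc, hheq, mul_assoc, hprod]
    rw [this]
    nlinarith [sq_nonneg (1 - Pm ω - Pp ω)]
  have hΨ0 : ∀ ω, 0 ≤ Ψ ω := by
    intro ω
    have h1 := hsum1 ω
    have h2 := hPm0 ω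
    have h3 := hPp0 ω
    have := hΨlb ω
    nlinarith
  -- Markov
  have hMarkov : δ₃ * (ℙ {ω | δ₃ ≤ Ψ ω}).toReal ≤ ∫ ω, Ψ ω ∂ℙ :=
    mul_meas_ge_le_integral_of_nonneg (Filter.Eventually.of_forall hΨ0) hΨint δ₃
  have hPbound : (ℙ {ω | δ₃ ≤ Ψ ω}).toReal ≤ (2 * δ₁ + 2 * δ₂) / δ₃ := by
    rw [le_div_iff₀ hδ₃]
    calc (ℙ {ω | δ₃ ≤ Ψ ω}).toReal * δ₃ = δ₃ * (ℙ {ω | δ₃ ≤ Ψ ω}).toReal := by ring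
      _ ≤ ∫ ω, Ψ ω ∂ℙ := hMarkov
      _ ≤ 2 * δ₁ + 2 * δ₂ := hEΨ
  -- the target event
  set E : Set Ω := {ω | 1 - δ₃ ≤ max (Pm ω) (Pp ω)} with hE
  have hPmmeas : Measurable Pm := by
    apply Measurable.const_mul
    exact Finset.measurable_sum _ (fun v _ =>
      Measurable.ite (hTm v) measurable_const measurable_const)
  have hPpmeas : Measurable Pp := by
    apply Measurable.const_mul
    exact Finset.measurable_sum _ (fun v _ =>
      Measurable.ite (hTp v) measurable_const measurable_const)
  have hEmeas : MeasurableSet E :=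
    measurableSet_le measurable_const (hPmmeas.max hPpmeas)
  have hsubset : Eᶜ ⊆ {ω | δ₃ ≤ Ψ ω} := by
    intro ω hω
    simp only [hE, Set.mem_compl_iff, Set.mem_setOf_eq, not_le] at hω
    have hmax : Pm ω ^ 2 + Pp ω ^ 2 ≤ max (Pm ω) (Pp ω) := by
      have h1 := hsum1 ω
      have h2 := hPm0 ω
      have h3 := hPp0 ω
      have h4 : Pm ω ≤ max (Pm ω) (Pp ω) := le_max_left _ _
      have h5 : Pp ω ≤ max (Pm ω) (Pp ω) := le_max_right _ _
      nlinarith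
    have := hΨlb ω
    simp only [Set.mem_setOf_eq]
    linarith
  have hcompl : (ℙ Eᶜ).toReal ≤ (2 * δ₁ + 2 * δ₂) / δ₃ := by
    refine le_trans ?_ hPbound
    exact ENNReal.toReal_mono (measure_ne_top ℙ _) (measure_mono hsubset)
  have hsplit : (ℙ E).toReal + (ℙ Eᶜ).toReal = 1 := by
    rw [← ENNReal.toReal_add (measure_ne_top ℙ _) (measure_ne_top ℙ _),
      measure_add_measure_compl hEmeas]
    simp
  have hfinal : 1 - 2 * (δ₁ + δ₂) / δ₃ ≤ (ℙ E).toReal := by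
    have : 2 * (δ₁ + δ₂) / δ₃ = (2 * δ₁ + 2 * δ₂) / δ₃ := by ring
    rw [this]
    linarith
  exact hfinal
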